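/- Let M be an n×n matrix over K = 𝔽_{q^n}, let h₀,…,h_{n−1} ∈ K be such that the 𝔽_q-linear map h(x) = Σ_{i=0}^{n−1} hᵢ x^{qⁱ} is a bijection of K, and set M′ = Σ_{i=0}^{n−1} hᵢ · M^{[σⁱ]}. Then M′ lies in the K-linear span of {D_z(M) : z ∈ K}, and moreover {D_z(M′) : z ∈ K} = {D_z(M) : z ∈ K}. -/

import Mathlib

/-- The σ-twist of a matrix: `(M^[σ])_{i,j} = (M_{i-1,j-1})^q` (indices mod `n`). -/
def sigmaTwist (q : ℕ) {n : ℕ} {K : Type*} [Field K]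
    (M : Matrix (ZMod n) (ZMod n) K) : Matrix (ZMod n) (ZMod n) K :=
  Matrix.of fun i j => (M (i - 1) (j - 1)) ^ q

/-- The contraction `D_z(M) = ∑_{j<n} z^{q^j} • M^{[σ^j]}`. -/
def contractionD (q n : ℕ) {K : Type*} [Field K] (z : K)
    (M : Matrix (ZMod n) (ZMod n) K) : Matrix (ZMod n) (ZMod n) K :=
  ∑ j ∈ Finset.range n, z ^ q ^ j • (sigmaTwist q)^[j] M

section aux
set_option linter.unusedSectionVars false

variable {K : Type*} [Field K] [Fintype K]

lemma sigmaTwist_iter_apply (q : ℕ) {n : ℕ} (j : ℕ) (A : Matrix (ZMod n) (ZMod n) K)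
    (a b : ZMod n) : (sigmaTwist q)^[j] A a b = (A (a - (j : ZMod n)) (b - (j : ZMod n))) ^ q ^ j := by
  induction j generalizing a b with
  | zero => simp
  | succ j ih =>
    rw [Function.iterate_succ_apply']
    show ((sigmaTwist q)^[j] A (a-1) (b-1)) ^ q = _
    rw [ih]
    rw [← pow_mul, ← pow_succ]
    congr 2 <;> push_cast <;> ring

lemma pow_pow_mod (Q N : ℕ) (hc : Fintype.card K = Q ^ N) (x : K) (s : ℕ) :
    x ^ Q ^ s = x ^ Q ^ (s % N) := by
  have key : ∀ t : ℕ, ∀ y : K, y ^ Q ^ (N * t) = y := by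
    intro t
    induction t with
    | zero => simp
    | succ t ih =>
      intro y
      have : Q ^ (N * (t+1)) = Q ^ N * Q ^ (N * t) := by rw [← pow_add]; ring_nf
      rw [this, pow_mul, ih]
      rw [← hc]; exact FiniteField.pow_card y
  conv_lhs => rw [← Nat.div_add_mod s N]
  rw [pow_add, pow_mul, key]

lemma contractionD_apply (q n : ℕ) (z : K) (N : Matrix (ZMod n) (ZMod n) K) (a b : ZMod n) :
    contractionD q n z N a b
      = ∑ j ∈ Finset.range n, z ^ q ^ j * (N (a - (j : ZMod n)) (b - (j : ZMod n))) ^ q ^ j := by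
  unfold contractionD
  rw [Matrix.sum_apply]
  refine Finset.sum_congr rfl fun j _ => ?_
  rw [Matrix.smul_apply, sigmaTwist_iter_apply, smul_eq_mul]

/-- the key computation: `D_z(M') = D_{w z}(M)` -/
lemma contractionD_comb (q n : ℕ) [NeZero n] (p k : ℕ) (hp : p.Prime) [CharP K p]
    (hqpk : q = p ^ k) (hK : Fintype.card K = q ^ n)
    (z : K) (M : Matrix (ZMod n) (ZMod n) K) (h : Fin n → K) :
    contractionD q n z (∑ i : Fin n, h i • (sigmaTwist q)^[(i : ℕ)] M) =
      contractionD q n (∑ i : Fin n, (h i * z) ^ q ^ ((n - (i : ℕ)) % n)) M := by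
  haveI : Fact p.Prime := ⟨hp⟩
  have hn : 0 < n := Nat.pos_of_ne_zero (NeZero.ne n)
  have hfrob : ∀ (j : ℕ) (f : Fin n → K),
      (∑ i : Fin n, f i) ^ q ^ j = ∑ i : Fin n, (f i) ^ q ^ j := by
    intro j f
    rw [hqpk, ← pow_mul]
    simpa only [iterateFrobenius_def] using
      map_sum (iterateFrobenius K p (k * j)) f Finset.univ
  ext a b
  rw [contractionD_apply, contractionD_apply]
  have hM' : ∀ x y : ZMod n,
      (∑ i : Fin n, h i • (sigmaTwist q)^[(i : ℕ)] M) x y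
        = ∑ i : Fin n, h i * (M (x - ((i : ℕ) : ZMod n)) (y - ((i : ℕ) : ZMod n))) ^ q ^ (i : ℕ) := by
    intro x y
    rw [Matrix.sum_apply]
    refine Finset.sum_congr rfl fun i _ => ?_
    rw [Matrix.smul_apply, sigmaTwist_iter_apply, smul_eq_mul]
  simp only [hM', hfrob, mul_pow, ← pow_mul, ← pow_add, Finset.mul_sum, Finset.sum_mul]
  rw [Finset.sum_comm, Finset.sum_comm (s := Finset.range n)]
  refine Finset.sum_congr rfl fun i _ => ?_
  have hi : (i : ℕ) < n := i.isLt
  refine Finset.sum_nbij' (fun j => (j + (i : ℕ)) % n) (fun c => (c + (n - (i : ℕ))) % n)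
      ?_ ?_ ?_ ?_ ?_
  · intro a _; exact Finset.mem_range.mpr (Nat.mod_lt _ hn)
  · intro a _; exact Finset.mem_range.mpr (Nat.mod_lt _ hn)
  · intro j hj
    have hj' : j < n := Finset.mem_range.mp hj
    show ((j + (i : ℕ)) % n + (n - (i : ℕ))) % n = j
    rw [Nat.mod_add_mod]
    have : j + (i : ℕ) + (n - (i : ℕ)) = j + n := by omega
    rw [this, Nat.add_mod_right, Nat.mod_eq_of_lt hj']
  · intro c hc
    have hc' : c < n := Finset.mem_range.mp hc
    show ((c + (n - (i : ℕ))) % n + (i : ℕ)) % n = c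
    rw [Nat.mod_add_mod]
    have : c + (n - (i : ℕ)) + (i : ℕ) = c + n := by omega
    rw [this, Nat.add_mod_right, Nat.mod_eq_of_lt hc']
  · intro j hj
    have hj' : j < n := Finset.mem_range.mp hj
    have hidx : (((j + (i : ℕ)) % n : ℕ) : ZMod n) = ((j : ZMod n) + ((i : ℕ) : ZMod n)) := by
      rw [ZMod.natCast_mod]; push_cast; ring
    have hexp1 : ∀ x : K, x ^ q ^ ((j + (i : ℕ)) % n) = x ^ q ^ ((i : ℕ) + j) := by
      intro x
      rw [pow_pow_mod q n hK x ((i : ℕ) + j), Nat.add_comm (i : ℕ) j]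
    have hexp2 : ∀ x : K, x ^ q ^ ((n - (i : ℕ)) % n + (j + (i : ℕ)) % n) = x ^ q ^ j := by
      intro x
      rw [pow_pow_mod q n hK x ((n - (i : ℕ)) % n + (j + (i : ℕ)) % n)]
      have : ((n - (i : ℕ)) % n + (j + (i : ℕ)) % n) % n = j := by
        rw [← Nat.add_mod]
        have : n - (i : ℕ) + (j + (i : ℕ)) = n + j := by omega
        rw [this, Nat.add_mod_left, Nat.mod_eq_of_lt hj']
      rw [this]
    simp only [hexp1, hexp2, hidx, sub_sub, mul_pow]
    ring

/-- distinct Frobenius powers are linearly independent as functions -/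
lemma frob_linIndep (p d : ℕ) (hp : p.Prime) (hc : Fintype.card K = p ^ d) :
    LinearIndependent K (fun m : Fin d => (fun x : K => x ^ p ^ (m : ℕ))) := by
  classical
  have hinj : Function.Injective (fun m : Fin d => (powMonoidHom (p ^ (m : ℕ)) : K →* K)) := by
    intro m m' hmm
    by_contra hne
    -- get a generator of Kˣ
    obtain ⟨g, hg⟩ := IsCyclic.exists_generator (α := Kˣ)
    have horder : orderOf g = p ^ d - 1 := by
      rw [orderOf_eq_card_of_forall_mem_zpowers hg, Nat.card_eq_fintype_card,
        Fintype.card_units, hc]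
    have hgp : g ^ p ^ (m : ℕ) = g ^ p ^ (m' : ℕ) := by
      ext
      have := congrArg (fun f : K →* K => f (g : K)) hmm
      simpa [powMonoidHom] using this
    rw [pow_eq_pow_iff_modEq, horder] at hgp
    have h2 : 2 ≤ p := hp.two_le
    -- both exponents < p^d, distinct, and their difference < p^d - 1
    have hne' : (m : ℕ) ≠ (m' : ℕ) := fun hh => hne (Fin.ext hh)
    have hmd : (m : ℕ) < d := m.isLt
    have hm'd : (m' : ℕ) < d := m'.isLt
    have key : ∀ a b : ℕ, a < b → b < d → ¬ (p ^ a ≡ p ^ b [MOD p ^ d - 1]) := by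
      intro a b hab hbd hmod
      have hdvd : (p ^ d - 1) ∣ (p ^ b - p ^ a) := (Nat.modEq_iff_dvd' (by
        exact Nat.pow_le_pow_right hp.one_lt.le hab.le)).mp hmod
      have hpos : 0 < p ^ b - p ^ a := by
        have := Nat.pow_lt_pow_right hp.one_lt hab
        omega
      have hle := Nat.le_of_dvd hpos hdvd
      have h1 : p ^ b < p ^ d := Nat.pow_lt_pow_right hp.one_lt hbd
      have h2 : 1 ≤ p ^ a := Nat.one_le_pow _ _ hp.pos
      omega
    rcases lt_or_gt_of_ne hne' with hlt | hlt
    · exact key _ _ hlt hm'd hgp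
    · exact key _ _ hlt hmd hgp.symm
  have h3 := (linearIndependent_monoidHom K K).comp _ hinj
  have he : ((fun f : K →* K => ⇑f) ∘ fun m : Fin d => (powMonoidHom (p ^ (m : ℕ)) : K →* K))
      = fun m : Fin d => (fun x : K => x ^ p ^ (m : ℕ)) := by
    funext m x
    simp [powMonoidHom_apply]
  rwa [he] at h3

/-- span of the Moore vectors is everything -/
lemma moore_span_top (q n : ℕ) [NeZero n] (p k : ℕ) (hp : p.Prime) (hk : 0 < k)
    (hq : q = p ^ k) (hK : Fintype.card K = q ^ n) :
    Submodule.span K (Set.range (fun z : K => (fun j : Fin n => z ^ q ^ (j : ℕ)))) = ⊤ := by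
  have hn : 0 < n := Nat.pos_of_ne_zero (NeZero.ne n)
  have hcard : Fintype.card K = p ^ (k * n) := by rw [hK, hq, ← pow_mul]
  have hli0 := frob_linIndep p (k * n) hp hcard
  -- restrict to exponents k * j
  have hli : LinearIndependent K (fun j : Fin n => (fun x : K => x ^ q ^ (j : ℕ))) := by
    have hinj : Function.Injective (fun j : Fin n => (⟨k * (j : ℕ), by
        exact (mul_lt_mul_iff_right₀ hk).mpr j.isLt⟩ : Fin (k * n))) := by
      intro a b hab
      have : k * (a : ℕ) = k * (b : ℕ) := congrArg Fin.val hab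
      exact Fin.ext (Nat.eq_of_mul_eq_mul_left hk this)
    have h3 := hli0.comp _ hinj
    have he : ((fun m : Fin (k * n) => (fun x : K => x ^ p ^ (m : ℕ))) ∘
        (fun j : Fin n => (⟨k * (j : ℕ), by exact (mul_lt_mul_iff_right₀ hk).mpr j.isLt⟩ : Fin (k * n))))
        = fun j : Fin n => (fun x : K => x ^ q ^ (j : ℕ)) := by
      funext j x
      simp only [Function.comp_apply, hq, ← pow_mul]
    rwa [he] at h3
  by_contra hne
  obtain ⟨f, hf0, hfbot⟩ := Submodule.exists_dual_map_eq_bot_of_lt_top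
    (lt_top_iff_ne_top.mpr hne) inferInstance
  set a : Fin n → K := fun j => f (Pi.single j 1) with ha
  have hfx : ∀ x : Fin n → K, f x = ∑ j : Fin n, x j * a j := by
    intro x
    conv_lhs => rw [pi_eq_sum_univ x]
    rw [map_sum]
    congr 1; funext j
    rw [map_smul, smul_eq_mul]
    congr 1
    rw [ha]
    congr 1
    funext j1
    simp [Pi.single_apply, eq_comm]
  have hav : ∀ z : K, ∑ j : Fin n, a j * z ^ q ^ (j : ℕ) = 0 := by
    intro z
    have hmem : (fun j : Fin n => z ^ q ^ (j : ℕ)) ∈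
        Submodule.span K (Set.range (fun z : K => (fun j : Fin n => z ^ q ^ (j : ℕ)))) :=
      Submodule.subset_span ⟨z, rfl⟩
    have : f (fun j : Fin n => z ^ q ^ (j : ℕ)) = 0 := by
      have := Submodule.mem_map_of_mem (f := f) hmem
      rw [hfbot] at this
      simpa using this
    rw [hfx] at this
    rw [← this]
    congr 1; funext j; ring
  have haz : a = 0 := by
    have := Fintype.linearIndependent_iff.mp hli a ?_
    · funext j; exact this j
    · funext z
      have := hav z
      simpa [Finset.sum_apply, mul_comm] using this
  apply hf0
  apply LinearMap.ext
  intro x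
  rw [hfx x, haz]
  simp

lemma w_surjective (q n : ℕ) [NeZero n] (p k : ℕ) (hp : p.Prime) [CharP K p]
    (hqpk : q = p ^ k) (hk : 0 < k) (hK : Fintype.card K = q ^ n)
    (h : Fin n → K)
    (hbij : Function.Bijective fun x : K => ∑ i : Fin n, h i * x ^ q ^ (i : ℕ)) :
    Function.Surjective fun z : K => ∑ i : Fin n, (h i * z) ^ q ^ ((n - (i : ℕ)) % n) := by
  haveI : Fact p.Prime := ⟨hp⟩
  have hn : 0 < n := Nat.pos_of_ne_zero (NeZero.ne n)
  set d := k * n with hd_def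
  have hd : 0 < d := Nat.mul_pos hk hn
  have hcard : Fintype.card K = p ^ d := by rw [hK, hqpk, ← pow_mul]
  set Tr : K → K := fun u => ∑ m ∈ Finset.range d, u ^ p ^ m with hTr_def
  have hpn0 : ∀ m : ℕ, p ^ m ≠ 0 := fun m => (Nat.pow_pos (n := m) hp.pos).ne'
  have hTr_zero : Tr 0 = 0 := by
    simp only [hTr_def]
    refine Finset.sum_eq_zero fun m _ => zero_pow (hpn0 m)
  have hTr_add : ∀ u v : K, Tr (u + v) = Tr u + Tr v := by
    intro u v
    simp only [hTr_def]
    rw [← Finset.sum_add_distrib]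
    refine Finset.sum_congr rfl fun m _ => ?_
    simpa only [iterateFrobenius_def] using map_add (iterateFrobenius K p m) u v
  -- Tr is invariant under p-th powers
  have hTr_p : ∀ u : K, Tr (u ^ p) = Tr u := by
    intro u
    have hf : ∀ m : ℕ, (u ^ p) ^ p ^ m = u ^ p ^ (m + 1) := by
      intro m
      rw [← pow_mul, ← pow_succ']
    simp only [hTr_def, hf]
    have hshift : ∑ m ∈ Finset.range d, u ^ p ^ (m + 1)
        = (∑ m ∈ Finset.range (d + 1), u ^ p ^ m) - u ^ p ^ 0 := by
      rw [Finset.sum_range_succ']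
      ring
    rw [hshift, Finset.sum_range_succ]
    have hud : u ^ p ^ d = u ^ p ^ 0 := by
      rw [pow_zero, pow_one, ← hcard]
      exact FiniteField.pow_card u
    rw [hud]
    ring
  have hTr_ppow : ∀ (s : ℕ) (u : K), Tr (u ^ p ^ s) = Tr u := by
    intro s
    induction s with
    | zero => intro u; simp
    | succ s ih =>
      intro u
      rw [pow_succ, pow_mul, hTr_p, ih]
  have hTr_qpow : ∀ (t : ℕ) (u : K), Tr (u ^ q ^ t) = Tr u := by
    intro t u
    rw [hqpk, ← pow_mul]
    exact hTr_ppow (k * t) u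
  -- Tr is not identically zero
  have hTr_ne : ∃ u₀ : K, Tr u₀ ≠ 0 := by
    by_contra hall
    push_neg at hall
    have hli := frob_linIndep p d hp hcard
    have hz : ∑ m : Fin d, (fun _ : Fin d => (1 : K)) m • (fun x : K => x ^ p ^ (m : ℕ)) = 0 := by
      funext u
      simp only [one_smul, Finset.sum_apply, Pi.zero_apply]
      have := hall u
      simp only [hTr_def] at this
      rw [← this]
      exact Fin.sum_univ_eq_sum_range (fun m => u ^ p ^ m) d
    have := Fintype.linearIndependent_iff.mp hli (fun _ => (1 : K)) hz ⟨0, hd⟩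
    exact one_ne_zero this
  -- Tr as an AddMonoidHom
  let TrHom : K →+ K := { toFun := Tr, map_zero' := hTr_zero, map_add' := hTr_add }
  -- the adjoint map as an AddMonoidHom
  let wHom : K →+ K := ∑ i : Fin n,
    ((iterateFrobenius K p (k * ((n - (i : ℕ)) % n))).toAddMonoidHom.comp
      (AddMonoidHom.mulLeft (h i)))
  have hwapp : ∀ z : K, wHom z = ∑ i : Fin n, (h i * z) ^ q ^ ((n - (i : ℕ)) % n) := by
    intro z
    rw [show (wHom z) = ∑ i : Fin n, (iterateFrobenius K p (k * ((n - (i : ℕ)) % n)))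
        ((h i) * z) from AddMonoidHom.finset_sum_apply _ _ _]
    refine Finset.sum_congr rfl fun i _ => ?_
    rw [iterateFrobenius_def, hqpk, ← pow_mul]
  -- the key duality identity
  have hident : ∀ x y : K, Tr (x * ∑ i : Fin n, h i * y ^ q ^ (i : ℕ)) = Tr (wHom x * y) := by
    intro x y
    rw [Finset.mul_sum, hwapp, Finset.sum_mul]
    have hs1 : Tr (∑ i : Fin n, x * (h i * y ^ q ^ (i : ℕ)))
        = ∑ i : Fin n, Tr (x * (h i * y ^ q ^ (i : ℕ))) := map_sum TrHom _ _
    have hs2 : Tr (∑ i : Fin n, (h i * x) ^ q ^ ((n - (i : ℕ)) % n) * y)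
        = ∑ i : Fin n, Tr ((h i * x) ^ q ^ ((n - (i : ℕ)) % n) * y) := map_sum TrHom _ _
    rw [hs1, hs2]
    refine Finset.sum_congr rfl fun i _ => ?_
    have hi : (i : ℕ) < n := i.isLt
    rw [← hTr_qpow (i : ℕ) ((h i * x) ^ q ^ ((n - (i : ℕ)) % n) * y)]
    congr 1
    rw [mul_pow, ← pow_mul, ← pow_add]
    have he0 : ((n - (i : ℕ)) % n + (i : ℕ)) % n = 0 := by
      rw [Nat.mod_add_mod]
      have : n - (i : ℕ) + (i : ℕ) = n := by omega
      rw [this, Nat.mod_self]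
    have : (h i * x) ^ q ^ ((n - (i : ℕ)) % n + (i : ℕ)) = h i * x := by
      rw [pow_pow_mod q n hK, he0, pow_zero, pow_one]
    rw [this]
    ring
  -- injectivity of wHom
  have hinj : Function.Injective wHom := by
    rw [injective_iff_map_eq_zero wHom] at *
    · intro z hz0
      by_contra hzne
      obtain ⟨u₀, hu₀⟩ := hTr_ne
      obtain ⟨y, hy⟩ := hbij.2 (z⁻¹ * u₀)
      have hy' : ∑ i : Fin n, h i * y ^ q ^ (i : ℕ) = z⁻¹ * u₀ := hy
      have : Tr (z * (z⁻¹ * u₀)) = 0 := by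
        rw [show z * (z⁻¹ * u₀) = z * ∑ i : Fin n, h i * y ^ q ^ (i : ℕ) by rw [hy']]
        rw [hident, hz0, zero_mul, hTr_zero]
      rw [← mul_assoc, mul_inv_cancel₀ hzne, one_mul] at this
      exact hu₀ this
  have hsurj : Function.Surjective (wHom : K → K) :=
    Finite.injective_iff_surjective.mp hinj
  intro u
  obtain ⟨z, hz⟩ := hsurj u
  refine ⟨z, ?_⟩
  show ∑ i : Fin n, (h i * z) ^ q ^ ((n - (i : ℕ)) % n) = u
  rw [← hwapp z]; exact hz

end aux

/-- If `h(x) = ∑ hᵢ x^{qⁱ}` is an invertible `𝔽_q`-linear map of `K` and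
`M' = ∑ hᵢ • M^{[σⁱ]}`, then `M'` lies in the `K`-span of the contraction space of `M`,
and the contraction spaces of `M'` and `M` coincide. -/
theorem stmt1 (q n : ℕ) [NeZero n]
    (hq : ∃ p k : ℕ, p.Prime ∧ 0 < k ∧ q = p ^ k)
    (K : Type*) [Field K] [Fintype K] (hK : Fintype.card K = q ^ n)
    (M : Matrix (ZMod n) (ZMod n) K)
    (h : Fin n → K)
    (hbij : Function.Bijective fun x : K => ∑ i : Fin n, h i * x ^ q ^ (i : ℕ)) :
    (∑ i : Fin n, h i • (sigmaTwist q)^[(i : ℕ)] M) ∈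
        Submodule.span K {A | ∃ z : K, A = contractionD q n z M} ∧
    {A | ∃ z : K, A = contractionD q n z (∑ i : Fin n, h i • (sigmaTwist q)^[(i : ℕ)] M)} =
      {A | ∃ z : K, A = contractionD q n z M} := by
  obtain ⟨p, k, hp, hk, hqpk⟩ := hq
  have hn : 0 < n := Nat.pos_of_ne_zero (NeZero.ne n)
  haveI hcharK : CharP K (ringChar K) := ringChar.charP K
  obtain ⟨m, hp'prime, hcard'⟩ := FiniteField.card K (ringChar K)
  have hpp' : p = ringChar K := by
    have h1 : p ∣ (ringChar K) ^ (m : ℕ) := by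
      rw [← hcard', hK, hqpk, ← pow_mul]
      exact dvd_pow_self p (Nat.mul_pos hk hn).ne'
    exact (Nat.prime_dvd_prime_iff_eq hp hp'prime).mp (hp.dvd_of_dvd_pow h1)
  haveI hchar : CharP K p := by rw [hpp']; infer_instance
  constructor
  · -- membership in the span
    have hspan := moore_span_top (K := K) q n p k hp hk hqpk hK
    have hmem : h ∈ Submodule.span K
        (Set.range (fun z : K => (fun j : Fin n => z ^ q ^ (j : ℕ)))) := by
      rw [hspan]; trivial
    obtain ⟨c, hc⟩ := (Submodule.mem_span_range_iff_exists_fun K).mp hmem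
    have hcj : ∀ i : Fin n, h i = ∑ z : K, c z * z ^ q ^ (i : ℕ) := by
      intro i
      rw [← congrFun hc i, Finset.sum_apply]
      refine Finset.sum_congr rfl fun z _ => ?_
      simp
    have hM' : (∑ i : Fin n, h i • (sigmaTwist q)^[(i : ℕ)] M)
        = ∑ z : K, c z • contractionD q n z M :=
      calc ∑ i : Fin n, h i • (sigmaTwist q)^[(i : ℕ)] M
          = ∑ i : Fin n, (∑ z : K, c z * z ^ q ^ (i : ℕ)) • (sigmaTwist q)^[(i : ℕ)] M := by
            refine Finset.sum_congr rfl fun i _ => ?_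
            rw [← hcj]
        _ = ∑ j ∈ Finset.range n, (∑ z : K, c z * z ^ q ^ j) • (sigmaTwist q)^[j] M :=
            Fin.sum_univ_eq_sum_range
              (fun j => (∑ z : K, c z * z ^ q ^ j) • (sigmaTwist q)^[j] M) n
        _ = ∑ j ∈ Finset.range n, ∑ z : K, (c z * z ^ q ^ j) • (sigmaTwist q)^[j] M := by
            refine Finset.sum_congr rfl fun j _ => Finset.sum_smul
        _ = ∑ z : K, ∑ j ∈ Finset.range n, (c z * z ^ q ^ j) • (sigmaTwist q)^[j] M :=
            Finset.sum_comm
        _ = ∑ z : K, c z • contractionD q n z M := by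
            refine Finset.sum_congr rfl fun z _ => ?_
            unfold contractionD
            rw [Finset.smul_sum]
            exact Finset.sum_congr rfl fun j _ => (smul_smul (c z) (z ^ q ^ j) _).symm
    rw [hM']
    exact Submodule.sum_mem _ fun z _ =>
      Submodule.smul_mem _ _ (Submodule.subset_span ⟨z, rfl⟩)
  · -- equality of contraction spaces
    ext A
    simp only [Set.mem_setOf_eq]
    constructor
    · rintro ⟨z, rfl⟩
      exact ⟨∑ i : Fin n, (h i * z) ^ q ^ ((n - (i : ℕ)) % n),
        contractionD_comb q n p k hp hqpk hK z M h⟩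
    · rintro ⟨u, rfl⟩
      obtain ⟨z, hz⟩ := w_surjective q n p k hp hqpk hk hK h hbij u
      have hz' : ∑ i : Fin n, (h i * z) ^ q ^ ((n - (i : ℕ)) % n) = u := hz
      exact ⟨z, by rw [contractionD_comb q n p k hp hqpk hK z M h, hz']⟩
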